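/- For every n : ℕ and all x x' θ θ' : Fin n → Bool: |⟪bb84 x' θ', bb84 x θ⟫|² = (1/2)^{d} if x i = x' i for every i with θ i = θ' i, and this quantity is 0 otherwise, where d is the cardinality of {i : Fin n | θ i ≠ θ' i}. -/

import Mathlib

noncomputable def bb84 {n : ℕ} (x θ : Fin n → Bool) : (Fin n → Bool) → ℂ :=
  fun y => ∏ i : Fin n,
    if θ i = true then
      ((1 / Real.sqrt 2 : ℝ) : ℂ) * (-1 : ℂ) ^ (if x i = true ∧ y i = true then 1 else 0)
    else (if y i = x i then (1 : ℂ) else 0)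

noncomputable def qInner {n : ℕ} (u v : (Fin n → Bool) → ℂ) : ℂ :=
  ∑ y : Fin n → Bool, (starRingEnd ℂ) (u y) * v y

noncomputable def coordSum (xi x'i θi θ'i : Bool) : ℂ :=
  ∑ b : Bool,
    (starRingEnd ℂ) (if θ'i = true then
        ((1 / Real.sqrt 2 : ℝ) : ℂ) * (-1 : ℂ) ^ (if x'i = true ∧ b = true then 1 else 0)
      else (if b = x'i then (1 : ℂ) else 0)) *
    (if θi = true then
        ((1 / Real.sqrt 2 : ℝ) : ℂ) * (-1 : ℂ) ^ (if xi = true ∧ b = true then 1 else 0)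
      else (if b = xi then (1 : ℂ) else 0))

lemma qInner_bb84 (n : ℕ) (x x' θ θ' : Fin n → Bool) :
    qInner (bb84 x' θ') (bb84 x θ) = ∏ i : Fin n, coordSum (x i) (x' i) (θ i) (θ' i) := by
  unfold coordSum
  rw [Fintype.prod_sum]
  unfold qInner bb84
  congr 1
  ext y
  rw [map_prod, ← Finset.prod_mul_distrib]

lemma coordSum_abs_sq (xi x'i θi θ'i : Bool) :
    ‖coordSum xi x'i θi θ'i‖ ^ 2 =
      if θi = θ'i then (if xi = x'i then 1 else 0) else (1/2 : ℝ) := by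
  have h2 : Real.sqrt 2 ^ 2 = 2 := Real.sq_sqrt (by norm_num)
  have hne : Real.sqrt 2 ≠ 0 := by positivity
  unfold coordSum
  cases θi <;> cases θ'i <;> cases xi <;> cases x'i <;>
    simp [Fintype.sum_bool, Complex.norm_def, Complex.normSq] <;>
    field_simp <;> (try left) <;> nlinarith [Real.sq_sqrt (show (2:ℝ) ≥ 0 by norm_num), Real.sqrt_nonneg 2, sq_abs (Real.sqrt 2)]

theorem bb84_overlap (n : ℕ) (x x' θ θ' : Fin n → Bool) :
    ‖qInner (bb84 x' θ') (bb84 x θ)‖ ^ 2 =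
      if ∀ i, θ i = θ' i → x i = x' i then
        (1 / 2 : ℝ) ^ (Finset.univ.filter fun i : Fin n => θ i ≠ θ' i).card
      else 0 := by
  rw [qInner_bb84, norm_prod, ← Finset.prod_pow]
  simp only [coordSum_abs_sq]
  by_cases h : ∀ i, θ i = θ' i → x i = x' i
  · rw [if_pos h, ← Finset.prod_const, Finset.prod_filter]
    apply Finset.prod_congr rfl
    intro i _
    by_cases hθ : θ i = θ' i
    · simp [hθ, h i hθ]
    · simp [hθ]
  · rw [if_neg h]
    push_neg at h
    obtain ⟨i, hθ, hx⟩ := h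
    exact Finset.prod_eq_zero (Finset.mem_univ i) (by simp [hθ, hx])
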